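/- Let Φ be an enriched GMSNP τ-sentence, τ = {R₁,…,R_t}, and Φ¹ the τ₁-sentence obtained by the concatenation construction, where τ₁ = {P}. For a τ₁-structure B₁, let B be the τ-structure on the same domain defined by: Rⱼ^B(x̄ⱼ) holds if and only if there exist tuples x̄₁,…,x̄_{j−1},x̄_{j+1},…,x̄_t such that P^{B₁}(x̄₁,…,x̄_t) holds. Then B₁ ⊨ Φ¹ if and only if B ⊨ Φ. -/

import Mathlib

/-- A finite relational signature: a type of relation symbols together with arities. -/
structure Signature where
  symb : Type
  arity : symb → ℕ

/-- A relational structure over signature `τ`: a domain together with an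
interpretation of every relation symbol as a set of tuples. -/
structure Struct (τ : Signature) where
  Dom : Type
  rel : ∀ r : τ.symb, Set (Fin (τ.arity r) → Dom)

/-- A homomorphism of `τ`-structures: a map of domains preserving every relation. -/
def IsHom {τ : Signature} (A B : Struct τ) (h : A.Dom → B.Dom) : Prop :=
  ∀ r : τ.symb, ∀ t ∈ A.rel r, (fun i => h (t i)) ∈ B.rel r

/-- A negated conjunct `¬(α ∧ β ∧ ε)` of an SNP sentence: a set of first-order
variables, a list of signed `τ`-atoms (`true` = positive), a list of signed
`σ`-atoms, and a list of inequalities between variables. -/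
structure Conjunct (τ σ : Signature) where
  Vars : Type
  tlits : List (Bool × (Σ r : τ.symb, Fin (τ.arity r) → Vars))
  slits : List (Bool × (Σ X : σ.symb, Fin (σ.arity X) → Vars))
  ineqs : List (Vars × Vars)

/-- An SNP sentence `∃X₁…Xₛ ∀x̄ ⋀ᵢ ¬(αᵢ ∧ βᵢ ∧ εᵢ)` over input signature `τ`
and existential signature `σ`, given by its list of negated conjuncts. -/
structure SNP (τ σ : Signature) where
  conjs : List (Conjunct τ σ)

/-- The conjunction `α ∧ β ∧ ε` inside a negated conjunct holds under given
interpretations of the `τ`- and `σ`-symbols and an assignment `v` of the variables. -/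
def Conjunct.HoldsUnder {τ σ : Signature} (c : Conjunct τ σ) {D : Type}
    (rt : ∀ r : τ.symb, Set (Fin (τ.arity r) → D))
    (rs : ∀ X : σ.symb, Set (Fin (σ.arity X) → D))
    (v : c.Vars → D) : Prop :=
  (∀ l ∈ c.tlits, if l.1 = true then (fun i => v (l.2.2 i)) ∈ rt l.2.1
      else (fun i => v (l.2.2 i)) ∉ rt l.2.1) ∧
  (∀ l ∈ c.slits, if l.1 = true then (fun i => v (l.2.2 i)) ∈ rs l.2.1
      else (fun i => v (l.2.2 i)) ∉ rs l.2.1) ∧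
  (∀ p ∈ c.ineqs, v p.1 ≠ v p.2)

/-- `A ⊨ Φ`: there is an interpretation of the existential symbols such that
every negated conjunct is falsified by every assignment of the variables. -/
def SNP.Sat {τ σ : Signature} (Φ : SNP τ σ) (A : Struct τ) : Prop :=
  ∃ rs : ∀ X : σ.symb, Set (Fin (σ.arity X) → A.Dom),
    ∀ c ∈ Φ.conjs, ∀ v : c.Vars → A.Dom, ¬ c.HoldsUnder A.rel rs v

/-- Φ is monotone: no negated `τ`-atoms occur. -/
def SNP.MonotoneSNP {τ σ : Signature} (Φ : SNP τ σ) : Prop :=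
  ∀ c ∈ Φ.conjs, ∀ l ∈ c.tlits, l.1 = true

/-- Φ is without inequality: each εᵢ is empty. -/
def SNP.NoIneq {τ σ : Signature} (Φ : SNP τ σ) : Prop :=
  ∀ c ∈ Φ.conjs, c.ineqs = []

/-- Every negated σ-atom is guarded by a τ-atom or by a nonnegated σ-atom. -/
def Conjunct.Guarded {τ σ : Signature} (c : Conjunct τ σ) : Prop :=
  ∀ l ∈ c.slits, l.1 = false →
    (∃ g ∈ c.tlits, Set.range l.2.2 ⊆ Set.range g.2.2) ∨
    (∃ g ∈ c.slits, g.1 = true ∧ Set.range l.2.2 ⊆ Set.range g.2.2)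

/-- Φ is in guarded monotone SNP (GMSNP). -/
def SNP.GMSNP {τ σ : Signature} (Φ : SNP τ σ) : Prop :=
  Φ.MonotoneSNP ∧ Φ.NoIneq ∧ ∀ c ∈ Φ.conjs, c.Guarded

/-- The list of variable sets of the literals of a conjunct. -/
def Conjunct.litVars {τ σ : Signature} (c : Conjunct τ σ) : List (Set c.Vars) :=
  c.tlits.map (fun l => Set.range l.2.2) ++ c.slits.map (fun l => Set.range l.2.2) ++
    c.ineqs.map (fun p => {p.1, p.2})

/-- A conjunct is connected: it cannot be split into two nonempty parts
whose variable sets are disjoint. -/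
def Conjunct.Connected {τ σ : Signature} (c : Conjunct τ σ) : Prop :=
  ∀ S : Set (Fin c.litVars.length), S.Nonempty → Sᶜ.Nonempty →
    ∃ i ∈ S, ∃ j ∈ Sᶜ, ∃ x : c.Vars, x ∈ c.litVars.get i ∧ x ∈ c.litVars.get j

/-- An SNP sentence is connected if all its negated conjuncts are. -/
def SNP.Connected {τ σ : Signature} (Φ : SNP τ σ) : Prop :=
  ∀ c ∈ Φ.conjs, c.Connected

/-- Disjoint union of two `τ`-structures. -/
def Struct.dsum {τ : Signature} (A B : Struct τ) : Struct τ where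
  Dom := A.Dom ⊕ B.Dom
  rel r := {t | (∃ t' ∈ A.rel r, t = fun i => Sum.inl (t' i)) ∨
                (∃ t' ∈ B.rel r, t = fun i => Sum.inr (t' i))}

/-- Disjoint union of a family of `τ`-structures. -/
def Struct.dSigma {τ : Signature} {I : Type} (F : I → Struct τ) : Struct τ where
  Dom := Σ i, (F i).Dom
  rel r := {t | ∃ i, ∃ t' ∈ (F i).rel r, t = fun j => ⟨i, t' j⟩}

/-- The structure `B_R` consisting of a single `R`-tuple of pairwise distinct elements. -/
def BStruct (τ : Signature) (R : τ.symb) : Struct τ where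
  Dom := Fin (τ.arity R)
  rel S := {t | ∃ h : S = R, ∀ i, t i = Fin.cast (congrArg τ.arity h) i}

/-- The signature `τ = {R₁,…,R_t}` with arities `a`. -/
def finSig (t : ℕ) (a : Fin t → ℕ) : Signature := ⟨Fin t, a⟩

/-- The signature `τ₁ = {P}` with a single symbol of arity `Σⱼ arity(Rⱼ)`. -/
def oneSig (t : ℕ) (a : Fin t → ℕ) : Signature := ⟨Unit, fun _ => ∑ j, a j⟩

/-- `e` is the canonical (order-preserving) bijection identifying a position in the
concatenation `(ȳ₁,…,ȳ_t)` with a pair (index `j`, position in `ȳⱼ`). -/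
def IsConcatEquiv {t : ℕ} {a : Fin t → ℕ}
    (e : (Σ j : Fin t, Fin (a j)) ≃ Fin (∑ j, a j)) : Prop :=
  ∀ p q : Σ j : Fin t, Fin (a j),
    (p.1 < q.1 ∨ (p.1 = q.1 ∧ (p.2 : ℕ) < (q.2 : ℕ))) → e p < e q

/-- Φ is enriched: every negated conjunct contains at least one `R`-atom
for each symbol `R` of the input signature. -/
def SNP.Enriched {τ σ : Signature} (Φ : SNP τ σ) : Prop :=
  ∀ c ∈ Φ.conjs, ∀ R : τ.symb, ∃ l ∈ c.tlits, l.2.1 = R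

/-- The concatenation construction on a negated conjunct: σ-literals are kept, and
each τ-atom `Rⱼ(x̄)` is replaced by the atom `P(ȳ₁,…,ȳ_t)` where `ȳⱼ = x̄` and all
other variables are fresh and used only in that atom. -/
def Conjunct.concat {t : ℕ} {a : Fin t → ℕ} {σ : Signature}
    (e : (Σ j : Fin t, Fin (a j)) ≃ Fin (∑ j, a j))
    (c : Conjunct (finSig t a) σ) : Conjunct (oneSig t a) σ where
  Vars := c.Vars ⊕ (Fin c.tlits.length × Fin (∑ j, a j))
  tlits := List.ofFn (fun m : Fin c.tlits.length =>
    ((c.tlits.get m).1, ⟨(), fun k =>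
      @dite _ ((e.symm k).1 = (c.tlits.get m).2.1) (instDecidableEqFin t _ _) (fun h =>
        Sum.inl ((c.tlits.get m).2.2 (Fin.cast (congrArg a h) (e.symm k).2)))
      (fun _ => Sum.inr (m, k))⟩))
  slits := c.slits.map (fun l => (l.1, ⟨l.2.1, fun i => Sum.inl (l.2.2 i)⟩))
  ineqs := c.ineqs.map (fun p => (Sum.inl p.1, Sum.inl p.2))

/-- The sentence `Φ¹` over `τ₁ = {P}` obtained by the concatenation construction. -/
def SNP.concat {t : ℕ} {a : Fin t → ℕ} {σ : Signature}
    (e : (Σ j : Fin t, Fin (a j)) ≃ Fin (∑ j, a j))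
    (Φ : SNP (finSig t a) σ) : SNP (oneSig t a) σ :=
  ⟨Φ.conjs.map (Conjunct.concat e)⟩

/-- The `τ`-structure `B` on the same domain as a `τ₁`-structure `B₁`:
`Rⱼ^B(x̄ⱼ)` iff there exist `x̄₁,…,x̄_{j−1},x̄_{j+1},…,x̄_t` with `P^{B₁}(x̄₁,…,x̄_t)`. -/
def Struct.fromOne {t : ℕ} {a : Fin t → ℕ}
    (e : (Σ j : Fin t, Fin (a j)) ≃ Fin (∑ j, a j))
    (B1 : Struct (oneSig t a)) : Struct (finSig t a) where
  Dom := B1.Dom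
  rel := fun j => {x | ∃ u ∈ B1.rel (), ∀ i, u (e ⟨j, i⟩) = x i}

/-- For an enriched GMSNP sentence `Φ` and the concatenated sentence `Φ¹`:
`B₁ ⊨ Φ¹` iff `B ⊨ Φ`. -/
lemma sigma_eta {t : ℕ} {a : Fin t → ℕ} (p : Σ j : Fin t, Fin (a j)) (j : Fin t)
    (h : p.1 = j) : (⟨j, Fin.cast (congrArg a h) p.2⟩ : Σ j, Fin (a j)) = p := by
  cases p; subst h; rfl


theorem sat_concat_fromOne {t : ℕ} {a : Fin t → ℕ} {σ : Signature}
    (e : (Σ j : Fin t, Fin (a j)) ≃ Fin (∑ j, a j)) (he : IsConcatEquiv e)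
    (Φ : SNP (finSig t a) σ) (hg : Φ.GMSNP) (henr : Φ.Enriched)
    (B1 : Struct (oneSig t a)) :
    (Φ.concat e).Sat B1 ↔ Φ.Sat (B1.fromOne e) := by
  obtain ⟨hmono, hnoineq, -⟩ := hg
  constructor
  · rintro ⟨rs, hrs⟩
    refine ⟨rs, ?_⟩
    intro c hc v hv
    obtain ⟨ht, hs, -⟩ := hv
    have hu : ∀ m : Fin c.tlits.length, ∃ u ∈ B1.rel (),
        ∀ i, u (e ⟨(c.tlits.get m).2.1, i⟩) = v ((c.tlits.get m).2.2 i) := by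
      intro m
      have hmem := ht (c.tlits.get m) (c.tlits.get_mem m)
      rw [hmono c hc _ (c.tlits.get_mem m)] at hmem
      exact hmem
    choose u hu1 hu2 using hu
    refine hrs (c.concat e) (List.mem_map_of_mem hc)
      (Sum.elim v (fun p => u p.1 p.2)) ⟨?_, ?_, ?_⟩
    · intro l hl
      change _ ∈ List.ofFn _ at hl
      obtain ⟨m, rfl⟩ := List.mem_ofFn.mp hl
      rw [if_pos (hmono c hc _ (c.tlits.get_mem m))]
      have hkey : (fun k => Sum.elim v (fun p => u p.1 p.2)
          (@dite _ ((e.symm k).1 = (c.tlits.get m).2.1) (instDecidableEqFin t _ _) (fun h =>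
            Sum.inl ((c.tlits.get m).2.2 (Fin.cast (congrArg a h) (e.symm k).2)))
          (fun _ => Sum.inr (m, k)))) = u m := by
        funext k
        by_cases h : (e.symm k).1 = (c.tlits.get m).2.1
        · rw [dif_pos h]
          have h2 := hu2 m (Fin.cast (congrArg a h) (e.symm k).2)
          rw [sigma_eta _ _ h, Equiv.apply_symm_apply] at h2
          exact h2.symm
        · rw [dif_neg h]; rfl
      exact hkey ▸ hu1 m
    · intro l hl
      simp only [Conjunct.concat, List.mem_map] at hl
      obtain ⟨l0, hl0, rfl⟩ := List.mem_map.mp hl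
      exact hs l0 hl0
    · intro p hp
      simp [Conjunct.concat, hnoineq c hc] at hp
      cases hp
  · rintro ⟨rs, hrs⟩
    refine ⟨rs, ?_⟩
    intro c1 hc1 v hv
    simp only [SNP.concat, List.mem_map] at hc1
    obtain ⟨c, hc, rfl⟩ := hc1
    obtain ⟨ht, hs, -⟩ := hv
    refine hrs c hc (fun x => v (Sum.inl x)) ⟨?_, ?_, ?_⟩
    · intro l hl
      obtain ⟨m, hm⟩ := List.get_of_mem hl
      rw [hmono c hc l hl, if_pos rfl]
      have htm := ht ((c.tlits.get m).1, ⟨(), fun k =>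
          @dite _ ((e.symm k).1 = (c.tlits.get m).2.1) (instDecidableEqFin t _ _) (fun h =>
            Sum.inl ((c.tlits.get m).2.2 (Fin.cast (congrArg a h) (e.symm k).2)))
          (fun _ => Sum.inr (m, k))⟩)
        (by simp only [Conjunct.concat]; exact List.mem_ofFn.mpr ⟨m, rfl⟩)
      rw [if_pos (hmono c hc _ (c.tlits.get_mem m))] at htm
      subst hm
      refine ⟨_, htm, ?_⟩
      intro i
      have hk : e.symm (e ⟨(c.tlits.get m).2.1, i⟩) = ⟨(c.tlits.get m).2.1, i⟩ :=
        e.symm_apply_apply _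
      show v (@dite _ _ (instDecidableEqFin t _ _) _ _) = _
      rw [hk]
      exact congrArg v (dif_pos rfl)
    · intro l hl
      have := hs (l.1, ⟨l.2.1, fun i => Sum.inl (l.2.2 i)⟩)
        (List.mem_map_of_mem hl)
      exact this
    · intro p hp
      rw [hnoineq c hc] at hp
      simp at hp
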